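/- Let N ≥ 2 and let R = ℂ[[s_0,…,s_{N−1}]] be the ring of formal power series in N variables over ℂ. Suppose that for each i with 0 ≤ i ≤ N−2 we are given units α_i and β_i of R, and let I be the ideal of R generated by the N−1 elements α_i·s_i − β_i·s_{i+1}. Then the quotient ring R/I is a discrete valuation ring, and for every j with 0 ≤ j ≤ N−1 the image of the variable s_j in R/I is nonzero and is not a unit. -/

import Mathlib

open MvPowerSeries

set_option linter.unusedSectionVars false
set_option linter.unusedVariables false


noncomputable section DVRAux

variable {N : ℕ}

/-- total degree of a monomial -/
def dg (m : Fin N →₀ ℕ) : ℕ := ∑ j, m j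

lemma dg_add (a b : Fin N →₀ ℕ) : dg (a + b) = dg a + dg b := by
  simp [dg, Finsupp.add_apply, Finset.sum_add_distrib]

lemma dg_eq_zero {m : Fin N →₀ ℕ} (h : dg m = 0) : m = 0 := by
  have := (Finset.sum_eq_zero_iff (s := Finset.univ) (f := fun j => m j)).mp h
  ext j; exact this j (Finset.mem_univ j)

lemma le_dg (m : Fin N →₀ ℕ) (j : Fin N) : m j ≤ dg m :=
  Finset.single_le_sum (fun _ _ => Nat.zero_le _) (Finset.mem_univ j)

lemma dg_mono {a b : Fin N →₀ ℕ} (h : a ≤ b) : dg a ≤ dg b :=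
  Finset.sum_le_sum fun j _ => (Finsupp.le_def.mp h) j

lemma dg_single (j : Fin N) (k : ℕ) : dg (Finsupp.single j k) = k := by
  simp [dg, Finsupp.single_apply]

/-- "order at least k" for multivariate power series -/
def ordGE (f : MvPowerSeries (Fin N) ℂ) (k : ℕ) : Prop :=
  ∀ m, dg m < k → coeff m f = 0

lemma ordGE_mono {f : MvPowerSeries (Fin N) ℂ} {k k' : ℕ} (h : ordGE f k) (hk : k' ≤ k) :
    ordGE f k' := fun m hm => h m (lt_of_lt_of_le hm hk)

lemma ordGE_zero (f : MvPowerSeries (Fin N) ℂ) : ordGE f 0 := fun _ hm => absurd hm (Nat.not_lt_zero _)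

lemma ordGE_add {f g : MvPowerSeries (Fin N) ℂ} {k : ℕ} (hf : ordGE f k) (hg : ordGE g k) :
    ordGE (f + g) k := fun m hm => by
  rw [map_add, hf m hm, hg m hm, add_zero]

lemma ordGE_mul {f g : MvPowerSeries (Fin N) ℂ} {a b : ℕ} (hf : ordGE f a) (hg : ordGE g b) :
    ordGE (f * g) (a + b) := by
  intro m hm
  rw [MvPowerSeries.coeff_mul]
  apply Finset.sum_eq_zero
  rintro ⟨u, v⟩ huv
  have h1 : u + v = m := Finset.HasAntidiagonal.mem_antidiagonal.mp huv
  have h2 : dg u + dg v < a + b := by rw [← dg_add, h1]; exact hm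
  rcases Nat.lt_or_ge (dg u) a with h | h
  · rw [hf u h, zero_mul]
  · have : dg v < b := by omega
    rw [hg v this, mul_zero]

lemma ordGE_mul_left {f g : MvPowerSeries (Fin N) ℂ} {b : ℕ} (hg : ordGE g b) :
    ordGE (f * g) b := by
  have := ordGE_mul (ordGE_zero f) hg
  simpa using this

lemma ordGE_pow {f : MvPowerSeries (Fin N) ℂ} (hf : ordGE f 1) (k : ℕ) : ordGE (f ^ k) k := by
  induction k with
  | zero => exact ordGE_zero _
  | succ n ih => rw [pow_succ]; simpa using ordGE_mul ih hf

lemma ordGE_prod_pow {χ : Fin N → MvPowerSeries (Fin N) ℂ} (hχ : ∀ j, ordGE (χ j) 1)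
    (m : Fin N →₀ ℕ) : ordGE (∏ j, χ j ^ m j) (dg m) := by
  classical
  have H : ∀ s : Finset (Fin N), ordGE (∏ j ∈ s, χ j ^ m j) (∑ j ∈ s, m j) := by
    intro s
    induction s using Finset.induction_on with
    | empty => simpa using ordGE_zero (N := N) 1
    | insert a s' hns ih =>
      rw [Finset.prod_insert hns, Finset.sum_insert hns]
      exact ordGE_mul (ordGE_pow (hχ a) (m a)) ih
  exact H Finset.univ

/-- "order at least k" for one-variable power series -/
def pord (f : PowerSeries ℂ) (k : ℕ) : Prop := ∀ d, d < k → PowerSeries.coeff d f = 0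

lemma pord_zero' (f : PowerSeries ℂ) : pord f 0 := fun _ h => absurd h (Nat.not_lt_zero _)

lemma pord_mul_left {f g : PowerSeries ℂ} {b : ℕ} (hg : pord g b) : pord (f * g) b := by
  intro d hd
  rw [PowerSeries.coeff_mul]
  apply Finset.sum_eq_zero
  rintro ⟨u, v⟩ huv
  have h1 : u + v = d := Finset.HasAntidiagonal.mem_antidiagonal.mp huv
  rw [hg v (by omega), mul_zero]

lemma pord_mul {f g : PowerSeries ℂ} {a b : ℕ} (hf : pord f a) (hg : pord g b) :
    pord (f * g) (a + b) := by
  intro d hd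
  rw [PowerSeries.coeff_mul]
  apply Finset.sum_eq_zero
  rintro ⟨u, v⟩ huv
  have h1 : u + v = d := Finset.HasAntidiagonal.mem_antidiagonal.mp huv
  rcases Nat.lt_or_ge u a with h | h
  · rw [hf u h, zero_mul]
  · rw [hg v (by omega), mul_zero]

lemma pord_pow {f : PowerSeries ℂ} (hf : pord f 1) (k : ℕ) : pord (f ^ k) k := by
  induction k with
  | zero => exact pord_zero' _
  | succ n ih => rw [pow_succ]; simpa using pord_mul ih hf

lemma pord_prod_pow {ψ : Fin N → PowerSeries ℂ} (hψ : ∀ j, pord (ψ j) 1)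
    (m : Fin N →₀ ℕ) : pord (∏ j, ψ j ^ m j) (dg m) := by
  classical
  have H : ∀ s : Finset (Fin N), pord (∏ j ∈ s, ψ j ^ m j) (∑ j ∈ s, m j) := by
    intro s
    induction s using Finset.induction_on with
    | empty => simpa using pord_zero' 1
    | insert a s' hns ih =>
      rw [Finset.prod_insert hns, Finset.sum_insert hns]
      exact pord_mul (pord_pow (hψ a) (m a)) ih
  exact H Finset.univ

end DVRAux

noncomputable section DVRAuxB

variable {N : ℕ} [NeZero N]

def lst : Fin N := ⟨N - 1, Nat.sub_lt (NeZero.pos N) one_pos⟩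

/-- the inclusion `ℂ[[t]] → ℂ[[s_0,…,s_{N-1}]]`, `t ↦ s_{N-1}`, as a function -/
def sigmaFun (f : PowerSeries ℂ) : MvPowerSeries (Fin N) ℂ :=
  fun m => if m = Finsupp.single lst (m lst) then PowerSeries.coeff (m lst) f else 0

lemma coeff_sigma (f : PowerSeries ℂ) (m : Fin N →₀ ℕ) :
    coeff m (sigmaFun f) =
      if m = Finsupp.single lst (m lst) then PowerSeries.coeff (m lst) f else 0 := rfl

lemma coeff_sigma_pure (f : PowerSeries ℂ) (q : ℕ) :
    coeff (Finsupp.single (lst (N := N)) q) (sigmaFun f) = PowerSeries.coeff q f := by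
  rw [coeff_sigma]
  simp [Finsupp.single_eq_same]

lemma coeff_sigma_nonpure (f : PowerSeries ℂ) {m : Fin N →₀ ℕ}
    (hm : m ≠ Finsupp.single lst (m lst)) : coeff m (sigmaFun f) = 0 := by
  rw [coeff_sigma, if_neg hm]

lemma sigma_ord {f : PowerSeries ℂ} {k : ℕ} (hf : pord f k) : ordGE (sigmaFun (N := N) f) k := by
  intro m hm
  rw [coeff_sigma]
  split_ifs with h
  · exact hf _ (lt_of_le_of_lt (by simpa using le_dg m lst) hm)
  · rfl

/-- `sigmaFun` as a ring homomorphism. -/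
def sigmaHom : PowerSeries ℂ →+* MvPowerSeries (Fin N) ℂ where
  toFun := sigmaFun
  map_one' := by
    ext m
    rw [coeff_sigma, MvPowerSeries.coeff_one]
    by_cases h0 : m = 0
    · subst h0
      simp
    · rw [if_neg h0]
      split_ifs with h
      · rw [PowerSeries.coeff_one, if_neg]
        · intro hq
          apply h0
          rw [h, hq, Finsupp.single_zero]
      · rfl
  map_mul' := by
    intro f g
    ext m
    rw [MvPowerSeries.coeff_mul]
    by_cases hm : m = Finsupp.single lst (m lst)
    · generalize hq : m lst = q at hm
      subst hm
      rw [coeff_sigma_pure, PowerSeries.coeff_mul, Finsupp.antidiagonal_single, Finset.sum_map]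
      apply Finset.sum_congr rfl
      rintro ⟨a, b⟩ hab
      simp only [Function.Embedding.coe_prodMap, Function.Embedding.coeFn_mk, Prod.map_apply]
      rw [coeff_sigma_pure, coeff_sigma_pure]
    · rw [coeff_sigma_nonpure _ hm]
      symm
      apply Finset.sum_eq_zero
      rintro ⟨u, v⟩ huv
      have h1 : u + v = m := Finset.HasAntidiagonal.mem_antidiagonal.mp huv
      by_cases hu : u = Finsupp.single lst (u lst)
      · by_cases hv : v = Finsupp.single lst (v lst)
        · exfalso
          apply hm
          rw [← h1]
          conv_lhs => rw [hu, hv]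
          rw [← Finsupp.single_add]
          congr 1
        · rw [coeff_sigma_nonpure _ hv, mul_zero]
      · rw [coeff_sigma_nonpure _ hu, zero_mul]
  map_zero' := by
    ext m
    rw [coeff_sigma]
    simp
  map_add' := by
    intro f g
    ext m
    rw [coeff_sigma, map_add, map_add, coeff_sigma, coeff_sigma]
    split_ifs <;> simp

lemma sigmaHom_apply (f : PowerSeries ℂ) : (sigmaHom (N := N)) f = sigmaFun f := rfl

lemma sigma_X : sigmaFun (N := N) PowerSeries.X = X lst := by
  ext m
  rw [coeff_sigma, MvPowerSeries.coeff_X]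
  by_cases hm : m = Finsupp.single lst 1
  · subst hm
    simp [Finsupp.single_eq_same, PowerSeries.coeff_X]
  · rw [if_neg hm]
    split_ifs with h
    · rw [PowerSeries.coeff_X, if_neg]
      intro h1
      exact hm (by rw [h, h1])
    · rfl

end DVRAuxB

set_option linter.unusedSectionVars false
noncomputable section DVRAuxC

variable {N : ℕ} [NeZero N]

/-- the constant exponent vector -/
def bb (d : ℕ) : Fin N →₀ ℕ := Finsupp.equivFunOnFinite.symm (fun _ => d)

lemma bb_apply (d : ℕ) (j : Fin N) : bb d j = d := rfl

lemma lt_bb {m : Fin N →₀ ℕ} {d : ℕ} (h : ∀ j, m j ≤ d) : m < bb (d + 1) := by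
  constructor
  · intro j
    exact le_trans (h j) (Nat.le_succ d)
  · intro hle
    have := Finsupp.le_def.mp hle (lst (N := N))
    rw [bb_apply] at this
    exact absurd this (by have := h (lst (N := N)); omega)

lemma lt_bb_of_dg {m : Fin N →₀ ℕ} {d : ℕ} (h : dg m ≤ d) : m < bb (d + 1) :=
  lt_bb fun j => le_trans (le_dg m j) h

lemma dg_gt_of_not_lt_bb {m : Fin N →₀ ℕ} {d : ℕ} (h : ¬ m < bb (d + 1)) : d < dg m := by
  by_contra hc
  exact h (lt_bb_of_dg (by omega))

/-- the finset of monomials of total degree at most `d` -/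
def MSet (d : ℕ) : Finset (Fin N →₀ ℕ) := (Finset.Iic (bb d)).filter (fun m => dg m ≤ d)

lemma mem_MSet {d : ℕ} {m : Fin N →₀ ℕ} : m ∈ MSet d ↔ dg m ≤ d := by
  rw [MSet, Finset.mem_filter, Finset.mem_Iic]
  constructor
  · exact fun h => h.2
  · intro h
    exact ⟨Finsupp.le_def.mpr fun j => le_trans (le_dg m j) h, h⟩

/-- the product `∏ ψ j ^ m j` in `ℂ[[t]]` -/
def psPow (ψ : Fin N → PowerSeries ℂ) (m : Fin N →₀ ℕ) : PowerSeries ℂ := ∏ j, ψ j ^ m j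

lemma psPow_single (ψ : Fin N → PowerSeries ℂ) (j : Fin N) (k : ℕ) :
    psPow ψ (Finsupp.single j k) = ψ j ^ k := by
  rw [psPow]
  rw [Finset.prod_eq_single j]
  · rw [Finsupp.single_eq_same]
  · intro i _ hij
    rw [Finsupp.single_eq_of_ne' (Ne.symm hij), pow_zero]
  · intro h
    exact absurd (Finset.mem_univ j) h

lemma psPow_zero (ψ : Fin N → PowerSeries ℂ) : psPow ψ 0 = 1 := by
  simp [psPow]

/-- all components have positive order -/
def P1 (ψ : Fin N → PowerSeries ℂ) : Prop := ∀ j, pord (ψ j) 1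

lemma pord_psPow {ψ : Fin N → PowerSeries ℂ} (hψ : P1 ψ) (m : Fin N →₀ ℕ) :
    pord (psPow ψ m) (dg m) := pord_prod_pow hψ m

/-- substitution of `ψ` into a multivariate power series, coefficientwise -/
def subPS (ψ : Fin N → PowerSeries ℂ) (f : MvPowerSeries (Fin N) ℂ) : PowerSeries ℂ :=
  PowerSeries.mk fun d =>
    PowerSeries.coeff d (MvPolynomial.eval₂ (PowerSeries.C) ψ (trunc ℂ (bb (d + 1)) f))

lemma support_trunc (n : Fin N →₀ ℕ) (f : MvPowerSeries (Fin N) ℂ) :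
    (trunc ℂ n f).support ⊆ Finset.Iio n := by
  intro m hm
  rw [MvPolynomial.mem_support_iff, coeff_trunc] at hm
  rw [Finset.mem_Iio]
  by_contra hc
  rw [if_neg hc] at hm
  exact hm rfl

lemma coeff_eval₂ (ψ : Fin N → PowerSeries ℂ) (P : MvPolynomial (Fin N) ℂ) (d : ℕ)
    {s : Finset (Fin N →₀ ℕ)} (hs : P.support ⊆ s) :
    PowerSeries.coeff d (MvPolynomial.eval₂ (PowerSeries.C) ψ P) =
      ∑ m ∈ s, P.coeff m * PowerSeries.coeff d (psPow ψ m) := by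
  rw [MvPolynomial.eval₂_eq', map_sum]
  rw [Finset.sum_subset hs]
  · apply Finset.sum_congr rfl
    intro m _
    rw [← psPow, PowerSeries.coeff_C_mul]
  · intro m _ hm
    rw [MvPolynomial.notMem_support_iff.mp hm, map_zero, zero_mul, map_zero]

lemma eval₂_coeff_zero {ψ : Fin N → PowerSeries ℂ} (hψ : P1 ψ) {P : MvPolynomial (Fin N) ℂ}
    {d : ℕ} (hP : ∀ m ∈ P.support, d < dg m) :
    PowerSeries.coeff d (MvPolynomial.eval₂ (PowerSeries.C) ψ P) = 0 := by
  rw [coeff_eval₂ ψ P d (le_refl P.support)]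
  apply Finset.sum_eq_zero
  intro m hm
  rw [pord_psPow hψ m d (hP m hm), mul_zero]

lemma sum_indep {ψ : Fin N → PowerSeries ℂ} (hψ : P1 ψ) (a : ℕ) (F : (Fin N →₀ ℕ) → ℂ)
    {s : Finset (Fin N →₀ ℕ)} (hs : ∀ m, dg m ≤ a → m ∈ s) :
    ∑ m ∈ s, F m * PowerSeries.coeff a (psPow ψ m) =
      ∑ m ∈ MSet a, F m * PowerSeries.coeff a (psPow ψ m) := by
  symm
  apply Finset.sum_subset
  · intro m hm
    exact hs m (mem_MSet.mp hm)
  · intro m _ hm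
    rw [pord_psPow hψ m a (by have := mem_MSet.not.mp hm; omega), mul_zero]

lemma coeff_subPS {ψ : Fin N → PowerSeries ℂ} (hψ : P1 ψ) (f : MvPowerSeries (Fin N) ℂ)
    (d : ℕ) :
    PowerSeries.coeff d (subPS ψ f) =
      ∑ m ∈ MSet d, coeff m f * PowerSeries.coeff d (psPow ψ m) := by
  rw [subPS, PowerSeries.coeff_mk,
    coeff_eval₂ ψ _ d (le_refl _)]
  rw [← sum_indep hψ d (fun m => coeff m f) (s := Finset.Iio (bb (d+1)))
    (fun m hm => Finset.mem_Iio.mpr (lt_bb_of_dg hm))]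
  rw [Finset.sum_subset (support_trunc (bb (d+1)) f)]
  · apply Finset.sum_congr rfl
    intro m hm
    rw [coeff_trunc, if_pos (Finset.mem_Iio.mp hm)]
  · intro m _ hm
    rw [MvPolynomial.notMem_support_iff.mp hm, zero_mul]

/-- truncation independence -/
lemma coeff_eval₂_trunc {ψ : Fin N → PowerSeries ℂ} (hψ : P1 ψ) (f : MvPowerSeries (Fin N) ℂ)
    {a d : ℕ} (had : a ≤ d) :
    PowerSeries.coeff a (MvPolynomial.eval₂ (PowerSeries.C) ψ (trunc ℂ (bb (d + 1)) f)) =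
      PowerSeries.coeff a (subPS ψ f) := by
  rw [coeff_subPS hψ, coeff_eval₂ ψ _ a (le_refl _)]
  rw [← sum_indep hψ a (fun m => coeff m f) (s := Finset.Iio (bb (d+1)))
    (fun m hm => Finset.mem_Iio.mpr (lt_bb_of_dg (by omega)))]
  rw [Finset.sum_subset (support_trunc (bb (d+1)) f)]
  · apply Finset.sum_congr rfl
    intro m hm
    rw [coeff_trunc, if_pos (Finset.mem_Iio.mp hm)]
  · intro m _ hm
    rw [MvPolynomial.notMem_support_iff.mp hm, zero_mul]

lemma subPS_add (ψ : Fin N → PowerSeries ℂ) (f g : MvPowerSeries (Fin N) ℂ) :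
    subPS ψ (f + g) = subPS ψ f + subPS ψ g := by
  ext d
  rw [map_add, subPS, subPS, subPS, PowerSeries.coeff_mk, PowerSeries.coeff_mk,
    PowerSeries.coeff_mk, map_add (trunc ℂ (bb (d+1))), MvPolynomial.eval₂_add, map_add]

lemma subPS_one (ψ : Fin N → PowerSeries ℂ) (hψ : P1 ψ) : subPS ψ 1 = 1 := by
  ext d
  rw [coeff_subPS hψ]
  rw [Finset.sum_eq_single_of_mem 0 (mem_MSet.mpr (by simp [dg]))]
  · rw [psPow_zero]
    simp [MvPowerSeries.coeff_one]
  · intro m _ hm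
    rw [MvPowerSeries.coeff_one, if_neg hm, zero_mul]

lemma subPS_mul {ψ : Fin N → PowerSeries ℂ} (hψ : P1 ψ) (f g : MvPowerSeries (Fin N) ℂ) :
    subPS ψ (f * g) = subPS ψ f * subPS ψ g := by
  ext d
  have key : trunc ℂ (bb (d+1)) (f * g) =
      (trunc ℂ (bb (d+1)) (f * g) - trunc ℂ (bb (d+1)) f * trunc ℂ (bb (d+1)) g) +
        trunc ℂ (bb (d+1)) f * trunc ℂ (bb (d+1)) g := by ring
  have hdiff : ∀ m ∈ (trunc ℂ (bb (d+1)) (f * g) -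
      trunc ℂ (bb (d+1)) f * trunc ℂ (bb (d+1)) g).support, d < dg m := by
    intro m hm
    rw [MvPolynomial.mem_support_iff] at hm
    by_contra hc
    apply hm
    have hmlt : m < bb (d+1) := lt_bb_of_dg (by omega)
    rw [MvPolynomial.coeff_sub, coeff_trunc, if_pos hmlt, MvPolynomial.coeff_mul,
      MvPowerSeries.coeff_mul]
    rw [sub_eq_zero]
    apply Finset.sum_congr rfl
    rintro ⟨u, v⟩ huv
    have h1 : u + v = m := Finset.HasAntidiagonal.mem_antidiagonal.mp huv
    have hu : u < bb (d+1) := lt_of_le_of_lt (h1 ▸ (Finsupp.le_def.mpr fun j => by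
      simp [Finsupp.add_apply])) hmlt
    have hv : v < bb (d+1) := lt_of_le_of_lt (h1 ▸ (Finsupp.le_def.mpr fun j => by
      simp [Finsupp.add_apply])) hmlt
    rw [coeff_trunc, if_pos hu, coeff_trunc, if_pos hv]
  rw [subPS, PowerSeries.coeff_mk, key, MvPolynomial.eval₂_add, map_add,
    eval₂_coeff_zero hψ hdiff, zero_add, MvPolynomial.eval₂_mul, PowerSeries.coeff_mul,
    PowerSeries.coeff_mul]
  apply Finset.sum_congr rfl
  rintro ⟨a, b⟩ hab
  have h1 : a + b = d := Finset.HasAntidiagonal.mem_antidiagonal.mp hab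
  rw [coeff_eval₂_trunc hψ f (by omega), coeff_eval₂_trunc hψ g (by omega)]

/-- `subPS` as a ring homomorphism -/
def subHom (ψ : Fin N → PowerSeries ℂ) (hψ : P1 ψ) :
    MvPowerSeries (Fin N) ℂ →+* PowerSeries ℂ where
  toFun := subPS ψ
  map_one' := subPS_one ψ hψ
  map_mul' := subPS_mul hψ
  map_zero' := by
    show subPS ψ 0 = 0
    ext d
    rw [subPS, PowerSeries.coeff_mk, map_zero (trunc ℂ (bb (d+1))), MvPolynomial.eval₂_zero,
      map_zero]
  map_add' := subPS_add ψ

lemma subHom_apply (ψ : Fin N → PowerSeries ℂ) (hψ : P1 ψ) (f : MvPowerSeries (Fin N) ℂ) :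
    subHom ψ hψ f = subPS ψ f := rfl

lemma subPS_X {ψ : Fin N → PowerSeries ℂ} (hψ : P1 ψ) (j : Fin N) :
    subPS ψ (X j) = ψ j := by
  ext d
  rw [coeff_subPS hψ]
  rw [Finset.sum_eq_single (Finsupp.single j 1)]
  · rw [MvPowerSeries.coeff_X, if_pos rfl, psPow_single, pow_one, one_mul]
  · intro m _ hm
    rw [MvPowerSeries.coeff_X, if_neg hm, zero_mul]
  · intro hnm
    rw [MvPowerSeries.coeff_X, if_pos rfl, psPow_single, pow_one, one_mul]
    rw [mem_MSet] at hnm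
    rw [dg_single] at hnm
    have h1 : d = 0 := by omega
    rw [h1] at hnm ⊢
    exact (hψ j 0 (by omega)).symm ▸ (hψ j 0 Nat.one_pos).symm

lemma subPS_const {ψ : Fin N → PowerSeries ℂ} (hψ : P1 ψ) (f : MvPowerSeries (Fin N) ℂ) :
    PowerSeries.coeff 0 (subPS ψ f) = coeff 0 f := by
  rw [coeff_subPS hψ]
  rw [Finset.sum_eq_single_of_mem 0 (mem_MSet.mpr (by simp [dg]))]
  · rw [psPow_zero]
    simp
  · intro m hm hm0
    exact absurd (dg_eq_zero (by have := mem_MSet.mp hm; omega)) hm0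

/-- agreement of coefficients up to level `d` -/
def agreeLE (d : ℕ) (x y : PowerSeries ℂ) : Prop :=
  ∀ a, a ≤ d → PowerSeries.coeff a x = PowerSeries.coeff a y

lemma agreeLE_mul {d : ℕ} {x y u v : PowerSeries ℂ} (h1 : agreeLE d x y)
    (h2 : agreeLE d u v) : agreeLE d (x * u) (y * v) := by
  intro a ha
  rw [PowerSeries.coeff_mul, PowerSeries.coeff_mul]
  apply Finset.sum_congr rfl
  rintro ⟨p, q⟩ hpq
  have h3 : p + q = a := Finset.HasAntidiagonal.mem_antidiagonal.mp hpq
  rw [h1 p (by omega), h2 q (by omega)]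

lemma agreeLE_pow {d : ℕ} {x y : PowerSeries ℂ} (h : agreeLE d x y) (k : ℕ) :
    agreeLE d (x ^ k) (y ^ k) := by
  induction k with
  | zero => intro a _; rw [pow_zero, pow_zero]
  | succ n ih => rw [pow_succ, pow_succ]; exact agreeLE_mul ih h

lemma agreeLE_psPow {d : ℕ} {ψ ψ' : Fin N → PowerSeries ℂ}
    (h : ∀ j, agreeLE d (ψ j) (ψ' j)) (m : Fin N →₀ ℕ) :
    agreeLE d (psPow ψ m) (psPow ψ' m) := by
  rw [psPow, psPow]
  have H : ∀ s : Finset (Fin N), agreeLE d (∏ j ∈ s, ψ j ^ m j) (∏ j ∈ s, ψ' j ^ m j) := by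
    intro s
    induction s using Finset.induction_on with
    | empty => intro a _; simp
    | insert c s' hns ih =>
      rw [Finset.prod_insert hns, Finset.prod_insert hns]
      exact agreeLE_mul (agreeLE_pow (h c) (m c)) ih
  exact H Finset.univ

/-- continuity of substitution in `ψ` -/
lemma subPS_cont {d : ℕ} {ψ ψ' : Fin N → PowerSeries ℂ} (hψ : P1 ψ) (hψ' : P1 ψ')
    (h : ∀ j, agreeLE d (ψ j) (ψ' j)) (f : MvPowerSeries (Fin N) ℂ) :
    agreeLE d (subPS ψ f) (subPS ψ' f) := by
  intro a ha
  rw [coeff_subPS hψ, coeff_subPS hψ']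
  apply Finset.sum_congr rfl
  intro m _
  rw [agreeLE_psPow h m a ha]

end DVRAuxC

noncomputable section DVRAuxD

variable {N : ℕ} [NeZero N]

variable (γn : ℕ → MvPowerSeries (Fin N) ℂ)

/-- one step of the fixed-point iteration defining the parametrization of the curve -/
def Phi (ψ : Fin N → PowerSeries ℂ) : Fin N → PowerSeries ℂ :=
  fun j => if h : (j : ℕ) + 1 < N then subPS ψ (γn j) * ψ ⟨(j : ℕ) + 1, h⟩ else PowerSeries.X

lemma pord_X_one : pord (PowerSeries.X : PowerSeries ℂ) 1 := by
  intro d hd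
  have : d = 0 := by omega
  rw [this, PowerSeries.coeff_X, if_neg (by omega)]

lemma P1_Phi {ψ : Fin N → PowerSeries ℂ} (hψ : P1 ψ) : P1 (Phi γn ψ) := by
  intro j
  rw [Phi]
  split_ifs with h
  · exact pord_mul_left (hψ _)
  · exact pord_X_one

/-- agreement of two substitution families up to coefficient level `d` -/
def AG (d : ℕ) (ψ ψ' : Fin N → PowerSeries ℂ) : Prop := ∀ j, agreeLE d (ψ j) (ψ' j)

lemma AG_Phi {d : ℕ} {ψ ψ' : Fin N → PowerSeries ℂ} (hψ : P1 ψ) (hψ' : P1 ψ')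
    (h : AG d ψ ψ') : AG d (Phi γn ψ) (Phi γn ψ') := by
  intro j
  simp only [Phi]
  split_ifs with hj
  · exact agreeLE_mul (subPS_cont hψ hψ' h (γn j)) (h _)
  · intro a _; rfl

/-- top-coefficient agreement above index `J` -/
def HJ (d : ℕ) (J : ℕ) (ψ ψ' : Fin N → PowerSeries ℂ) : Prop :=
  ∀ j : Fin N, J ≤ (j : ℕ) → PowerSeries.coeff (d + 1) (ψ j) = PowerSeries.coeff (d + 1) (ψ' j)

lemma HJ_Phi {d J : ℕ} {ψ ψ' : Fin N → PowerSeries ℂ} (hψ : P1 ψ) (hψ' : P1 ψ')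
    (hAG : AG d ψ ψ') (hHJ : HJ d (J + 1) ψ ψ') : HJ d J (Phi γn ψ) (Phi γn ψ') := by
  intro j _
  simp only [Phi]
  split_ifs with hj
  · rw [PowerSeries.coeff_mul, PowerSeries.coeff_mul]
    apply Finset.sum_congr rfl
    rintro ⟨p, q⟩ hpq
    have h1 : p + q = d + 1 := Finset.HasAntidiagonal.mem_antidiagonal.mp hpq
    rcases Nat.eq_zero_or_pos q with hq | hq
    · rw [hq, hψ ⟨(j : ℕ) + 1, hj⟩ 0 Nat.one_pos, hψ' ⟨(j : ℕ) + 1, hj⟩ 0 Nat.one_pos,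
        mul_zero, mul_zero]
    · rcases Nat.lt_or_ge q (d + 1) with hq2 | hq2
      · rw [subPS_cont hψ hψ' (fun i => hAG i) (γn j) p (by omega), hAG _ q (by omega)]
      · have hqd : q = d + 1 := by omega
        have hp0 : p = 0 := by omega
        rw [hqd, hp0, subPS_const hψ, subPS_const hψ']
        rw [hHJ ⟨(j : ℕ) + 1, hj⟩ (by simp; omega)]
  · rfl

lemma P1_iter (ψ : Fin N → PowerSeries ℂ) (hψ : P1 ψ) (k : ℕ) : P1 ((Phi γn)^[k] ψ) := by
  induction k with
  | zero => exact hψ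
  | succ n ih => rw [Function.iterate_succ_apply']; exact P1_Phi γn ih

lemma AG_iter {d : ℕ} {ψ ψ' : Fin N → PowerSeries ℂ} (hψ : P1 ψ) (hψ' : P1 ψ')
    (h : AG d ψ ψ') (k : ℕ) : AG d ((Phi γn)^[k] ψ) ((Phi γn)^[k] ψ') := by
  induction k with
  | zero => exact h
  | succ n ih =>
    rw [Function.iterate_succ_apply', Function.iterate_succ_apply']
    exact AG_Phi γn (P1_iter γn ψ hψ n) (P1_iter γn ψ' hψ' n) ih

lemma AG_succ_of_iterN {d : ℕ} {ψ ψ' : Fin N → PowerSeries ℂ} (hψ : P1 ψ) (hψ' : P1 ψ')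
    (h : AG d ψ ψ') : AG (d + 1) ((Phi γn)^[N] ψ) ((Phi γn)^[N] ψ') := by
  have key : ∀ k : ℕ, k ≤ N → HJ d (N - k) ((Phi γn)^[k] ψ) ((Phi γn)^[k] ψ') := by
    intro k
    induction k with
    | zero =>
      intro _ j hj
      exact absurd hj (by have := j.isLt; omega)
    | succ n ih =>
      intro hn
      rw [Function.iterate_succ_apply', Function.iterate_succ_apply']
      have h2 : HJ d (N - n - 1 + 1) ((Phi γn)^[n] ψ) ((Phi γn)^[n] ψ') := by
        have : N - n - 1 + 1 = N - n := by omega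
        rw [this]
        exact ih (by omega)
      have := HJ_Phi γn (P1_iter γn ψ hψ n) (P1_iter γn ψ' hψ' n)
        (AG_iter γn hψ hψ' h n) h2
      have heq : N - (n + 1) = N - n - 1 := by omega
      rw [heq]
      exact this
  intro j a ha
  rcases Nat.lt_or_ge a (d + 1) with h1 | h1
  · exact AG_iter γn hψ hψ' h N j a (by omega)
  · have ha1 : a = d + 1 := by omega
    rw [ha1]
    exact key N (le_refl N) j (by omega)

/-- the iteration sequence, starting from `(X, X, …, X)` -/
def phiSeq (k : ℕ) : Fin N → PowerSeries ℂ := (Phi γn)^[k] (fun _ => PowerSeries.X)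

lemma P1_phiSeq (k : ℕ) : P1 (phiSeq γn k) := P1_iter γn _ (fun _ => pord_X_one) k

lemma AG_stab : ∀ d k k', N * d ≤ k → N * d ≤ k' → AG d (phiSeq γn k) (phiSeq γn k') := by
  have main : ∀ d (ψ ψ' : Fin N → PowerSeries ℂ), P1 ψ → P1 ψ' →
      AG d ((Phi γn)^[N * d] ψ) ((Phi γn)^[N * d] ψ') := by
    intro d
    induction d with
    | zero =>
      intro ψ ψ' hψ hψ' j a ha
      have ha0 : a = 0 := by omega
      subst ha0
      rw [P1_iter γn ψ hψ (N * 0) j 0 Nat.one_pos, P1_iter γn ψ' hψ' (N * 0) j 0 Nat.one_pos]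
    | succ d ih =>
      intro ψ ψ' hψ hψ'
      have hmul : N * (d + 1) = N + N * d := by ring
      rw [hmul, Function.iterate_add_apply, Function.iterate_add_apply]
      exact AG_succ_of_iterN γn (P1_iter γn ψ hψ _) (P1_iter γn ψ' hψ' _)
        (ih _ _ hψ hψ')
  intro d k k' hk hk'
  have e1 : k = N * d + (k - N * d) := by omega
  have e2 : k' = N * d + (k' - N * d) := by omega
  rw [phiSeq, phiSeq, e1, e2, Function.iterate_add_apply, Function.iterate_add_apply]
  exact main d _ _ (P1_iter γn _ (fun _ => pord_X_one) _) (P1_iter γn _ (fun _ => pord_X_one) _)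

/-- the parametrization of the curve: the limit of the iteration -/
def phiF : Fin N → PowerSeries ℂ :=
  fun j => PowerSeries.mk fun d => PowerSeries.coeff d (phiSeq γn (N * (d + 1)) j)

lemma AG_phiF (d : ℕ) : AG d (phiF γn) (phiSeq γn (N * (d + 1))) := by
  intro j a ha
  rw [phiF, PowerSeries.coeff_mk]
  exact AG_stab γn a _ _ (by nlinarith) (by nlinarith) j a (le_refl a)

lemma P1_phiF : P1 (phiF γn) := by
  intro j d hd
  have hd0 : d = 0 := by omega
  rw [hd0, AG_phiF γn 0 j 0 (le_refl 0)]
  exact P1_phiSeq γn _ j 0 Nat.one_pos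

lemma phiF_fix : ∀ j, phiF γn j = Phi γn (phiF γn) j := by
  intro j
  ext d
  set k := N * (d + 1) with hk
  have h1 : AG d (Phi γn (phiF γn)) (Phi γn (phiSeq γn k)) :=
    AG_Phi γn (P1_phiF γn) (P1_phiSeq γn k) (AG_phiF γn d)
  have h2 : Phi γn (phiSeq γn k) = phiSeq γn (k + 1) := by
    rw [phiSeq, phiSeq, Function.iterate_succ_apply']
  calc PowerSeries.coeff d (phiF γn j)
      = PowerSeries.coeff d (phiSeq γn k j) := AG_phiF γn d j d (le_refl d)
    _ = PowerSeries.coeff d (phiSeq γn (k + 1) j) :=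
        (AG_stab γn d (k + 1) k
          (by have := Nat.mul_le_mul_left N (show d ≤ d + 1 by omega); omega)
          (by have := Nat.mul_le_mul_left N (show d ≤ d + 1 by omega); omega) j d (le_refl d)).symm
    _ = PowerSeries.coeff d (Phi γn (phiSeq γn k) j) := by rw [h2]
    _ = PowerSeries.coeff d (Phi γn (phiF γn) j) := (h1 j d (le_refl d)).symm

lemma phiF_last : phiF γn (lst (N := N)) = PowerSeries.X := by
  rw [phiF_fix γn, Phi]
  rw [dif_neg]
  show ¬ (N - 1 + 1 < N)
  have := NeZero.pos N
  omega

lemma phiF_rec (j : Fin N) (h : (j : ℕ) + 1 < N) :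
    phiF γn j = subPS (phiF γn) (γn j) * phiF γn ⟨(j : ℕ) + 1, h⟩ := by
  rw [phiF_fix γn j, Phi, dif_pos h]

end DVRAuxD

noncomputable section DVRAuxE

variable {N : ℕ} [NeZero N]

/-- the product `∏ χ j ^ m j` in the multivariate power series ring -/
def chPow (χ : Fin N → MvPowerSeries (Fin N) ℂ) (m : Fin N →₀ ℕ) : MvPowerSeries (Fin N) ℂ :=
  ∏ j, χ j ^ m j

lemma ordGE_chPow {χ : Fin N → MvPowerSeries (Fin N) ℂ} (hχ : ∀ j, ordGE (χ j) 1)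
    (m : Fin N →₀ ℕ) : ordGE (chPow χ m) (dg m) := ordGE_prod_pow hχ m

lemma chPow_zero (χ : Fin N → MvPowerSeries (Fin N) ℂ) : chPow χ 0 = 1 := by simp [chPow]

/-- the monomial `∏ X j ^ m j` -/
def XPow (m : Fin N →₀ ℕ) : MvPowerSeries (Fin N) ℂ := chPow MvPowerSeries.X m

lemma coeff_XPow (m κ : Fin N →₀ ℕ) : coeff κ (XPow m) = if κ = m then 1 else 0 := by
  have e0 : ∀ j : Fin N, MvPolynomial.coeToMvPowerSeries.ringHom
      (MvPolynomial.X j ^ m j : MvPolynomial (Fin N) ℂ) = MvPowerSeries.X j ^ m j := by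
    intro j
    rw [map_pow, MvPolynomial.coeToMvPowerSeries.ringHom_apply, MvPolynomial.coe_X]
  have epoly : (∏ j : Fin N, MvPolynomial.X j ^ m j : MvPolynomial (Fin N) ℂ)
      = MvPolynomial.monomial m (1 : ℂ) := by
    rw [← MvPolynomial.prod_X_pow_eq_monomial]
    symm
    apply Finset.prod_subset (Finset.subset_univ m.support)
    intro j _ hj
    rw [Finsupp.notMem_support_iff.mp hj, pow_zero]
  have h1 : XPow m = ((MvPolynomial.monomial m (1 : ℂ) : MvPolynomial (Fin N) ℂ) :
      MvPowerSeries (Fin N) ℂ) := by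
    rw [XPow, chPow]
    calc (∏ j, (MvPowerSeries.X j : MvPowerSeries (Fin N) ℂ) ^ m j)
        = ∏ j, MvPolynomial.coeToMvPowerSeries.ringHom
            (MvPolynomial.X j ^ m j : MvPolynomial (Fin N) ℂ) :=
          (Finset.prod_congr rfl (fun j _ => (e0 j).symm))
      _ = MvPolynomial.coeToMvPowerSeries.ringHom (∏ j : Fin N, MvPolynomial.X j ^ m j) :=
          (map_prod _ _ _).symm
      _ = ((MvPolynomial.monomial m (1 : ℂ) : MvPolynomial (Fin N) ℂ) :
            MvPowerSeries (Fin N) ℂ) := by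
          rw [epoly, MvPolynomial.coeToMvPowerSeries.ringHom_apply]
  rw [h1, MvPolynomial.coeff_coe, MvPolynomial.coeff_monomial]
  split_ifs with h2 h3 h3 <;> first | rfl | (exact absurd h2.symm h3) | (exact absurd h3.symm h2)

lemma ordGE_zero_series (k : ℕ) : ordGE (0 : MvPowerSeries (Fin N) ℂ) k := fun m _ => map_zero _

lemma ordGE_X (j : Fin N) : ordGE (MvPowerSeries.X j : MvPowerSeries (Fin N) ℂ) 1 := by
  intro m hm
  rw [MvPowerSeries.coeff_X]
  split_ifs with h
  · subst h
    rw [dg_single] at hm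
    omega
  · rfl

/-- index used in the Taylor recursion: the smallest element of the support -/
def jmin (m : Fin N →₀ ℕ) : Fin N :=
  if hm : m.support.Nonempty then m.support.min' hm else lst

lemma jmin_pos {m : Fin N →₀ ℕ} (hm : m ≠ 0) : 1 ≤ m (jmin m) := by
  have hne : m.support.Nonempty := Finsupp.support_nonempty_iff.mpr hm
  rw [jmin, dif_pos hne]
  have := Finset.min'_mem m.support hne
  rw [Finsupp.mem_support_iff] at this
  omega

lemma dg_sub_single {m : Fin N →₀ ℕ} {j : Fin N} (h : 1 ≤ m j) :
    dg (m - Finsupp.single j 1) + 1 = dg m := by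
  have : m = (m - Finsupp.single j 1) + Finsupp.single j 1 := by
    ext i
    rw [Finsupp.add_apply, Finsupp.tsub_apply]
    by_cases hij : i = j
    · subst hij
      rw [Finsupp.single_eq_same]
      omega
    · rw [Finsupp.single_eq_of_ne' (fun hh => hij hh.symm)]
      omega
  conv_rhs => rw [this]
  rw [dg_add, dg_single]

lemma prod_pow_split (F : Fin N → MvPowerSeries (Fin N) ℂ) (m : Fin N →₀ ℕ) (j : Fin N)
    (h : 1 ≤ m j) :
    ∏ i, F i ^ m i = F j * ∏ i, F i ^ ((m - Finsupp.single j 1 : Fin N →₀ ℕ) i) := by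
  rw [← Finset.mul_prod_erase Finset.univ (fun i => F i ^ m i) (Finset.mem_univ j),
    ← Finset.mul_prod_erase Finset.univ (fun i => F i ^ ((m - Finsupp.single j 1 : Fin N →₀ ℕ) i))
      (Finset.mem_univ j)]
  have h1 : (m - Finsupp.single j 1 : Fin N →₀ ℕ) j = m j - 1 := by
    rw [Finsupp.tsub_apply, Finsupp.single_eq_same]
  have h2 : ∀ i ∈ Finset.univ.erase j, F i ^ m i
      = F i ^ ((m - Finsupp.single j 1 : Fin N →₀ ℕ) i) := by
    intro i hi
    have hij : i ≠ j := (Finset.mem_erase.mp hi).1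
    rw [Finsupp.tsub_apply, Finsupp.single_eq_of_ne' (fun hh => hij hh.symm), Nat.sub_zero]
  rw [Finset.prod_congr rfl h2, h1, ← mul_assoc]
  congr 1
  have h3 : m j = (m j - 1) + 1 := by omega
  conv_lhs => rw [h3]
  rw [pow_succ]
  exact mul_comm _ _

lemma chPow_split (χ : Fin N → MvPowerSeries (Fin N) ℂ) {m : Fin N →₀ ℕ} {j : Fin N}
    (h : 1 ≤ m j) : chPow χ m = χ j * chPow χ (m - Finsupp.single j 1) :=
  prod_pow_split χ m j h

/-- the Taylor coefficient series, defined with fuel -/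
def BT (χ : Fin N → MvPowerSeries (Fin N) ℂ) : ℕ → (Fin N →₀ ℕ) → Fin N →
    MvPowerSeries (Fin N) ℂ
  | 0 => fun _ _ => 0
  | (d + 1) => fun m l =>
      if m = 0 then 0 else
        MvPowerSeries.X (jmin m) * BT χ d (m - Finsupp.single (jmin m) 1) l +
          if l = jmin m then chPow χ (m - Finsupp.single (jmin m) 1) else 0

lemma BT_zero_fuel (χ) (m l) : BT (N := N) χ 0 m l = 0 := rfl

lemma BT_zero (χ) (d : ℕ) (l) : BT (N := N) χ d 0 l = 0 := by
  cases d with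
  | zero => rfl
  | succ d => simp [BT]

lemma BT_succ (χ) {m : Fin N →₀ ℕ} (hm : m ≠ 0) (d : ℕ) (l) :
    BT χ (d + 1) m l =
      MvPowerSeries.X (jmin m) * BT χ d (m - Finsupp.single (jmin m) 1) l +
        if l = jmin m then chPow χ (m - Finsupp.single (jmin m) 1) else 0 := by
  simp only [BT, if_neg hm]

lemma BT_taylor {χ : Fin N → MvPowerSeries (Fin N) ℂ} :
    ∀ (d : ℕ) (m : Fin N →₀ ℕ), dg m ≤ d →
      XPow m - chPow χ m = ∑ l, (MvPowerSeries.X l - χ l) * BT χ d m l := by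
  intro d
  induction d with
  | zero =>
    intro m hm
    have hm0 : m = 0 := dg_eq_zero (by omega)
    subst hm0
    rw [XPow, chPow_zero, chPow_zero, sub_self]
    symm
    apply Finset.sum_eq_zero
    intro l _
    rw [BT_zero_fuel, mul_zero]
  | succ d ih =>
    intro m hm
    by_cases hm0 : m = 0
    · subst hm0
      rw [XPow, chPow_zero, chPow_zero, sub_self]
      symm
      apply Finset.sum_eq_zero
      intro l _
      rw [BT_zero, mul_zero]
    · set j := jmin m with hj
      have hj1 : 1 ≤ m j := jmin_pos hm0
      set m' := m - Finsupp.single j 1 with hm'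
      have hdg : dg m' + 1 = dg m := dg_sub_single hj1
      have hdg' : dg m' ≤ d := by omega
      have e1 : XPow m = MvPowerSeries.X j * XPow m' := prod_pow_split _ m j hj1
      have e2 : chPow χ m = χ j * chPow χ m' := prod_pow_split _ m j hj1
      have key : XPow m - chPow χ m =
          MvPowerSeries.X j * (XPow m' - chPow χ m') +
            (MvPowerSeries.X j - χ j) * chPow χ m' := by
        rw [e1, e2]; ring
      rw [key, ih m' hdg']
      have expand : ∀ l, (MvPowerSeries.X l - χ l) * BT χ (d+1) m l =
          MvPowerSeries.X j * ((MvPowerSeries.X l - χ l) * BT χ d m' l) +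
            (MvPowerSeries.X l - χ l) * (if l = j then chPow χ m' else 0) := by
        intro l
        rw [BT_succ χ hm0, ← hj, ← hm']
        ring
      rw [Finset.sum_congr rfl (fun l _ => expand l), Finset.sum_add_distrib, ← Finset.mul_sum]
      congr 1
      rw [Finset.sum_eq_single j]
      · rw [if_pos rfl]
      · intro l _ hl
        rw [if_neg hl, mul_zero]
      · intro hj2
        exact absurd (Finset.mem_univ j) hj2

lemma BT_ord {χ : Fin N → MvPowerSeries (Fin N) ℂ} (hχ : ∀ j, ordGE (χ j) 1) :
    ∀ (d : ℕ) (m : Fin N →₀ ℕ) (l : Fin N), dg m ≤ d → ordGE (BT χ d m l) (dg m - 1) := by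
  intro d
  induction d with
  | zero =>
    intro m l hm
    have hm0 : m = 0 := dg_eq_zero (by omega)
    subst hm0
    rw [BT_zero]
    exact ordGE_zero_series _
  | succ d ih =>
    intro m l hm
    by_cases hm0 : m = 0
    · subst hm0
      rw [BT_zero]
      exact ordGE_zero_series _
    · rw [BT_succ χ hm0]
      set j := jmin m
      have hj1 : 1 ≤ m j := jmin_pos hm0
      set m' := m - Finsupp.single j 1 with hm'
      have hdg : dg m' + 1 = dg m := dg_sub_single hj1
      apply ordGE_add
      · have h1 := ordGE_mul (ordGE_X j) (ih m' l (by omega))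
        exact ordGE_mono h1 (by omega)
      · split_ifs with h
        · exact ordGE_mono (ordGE_chPow hχ m') (by omega)
        · exact ordGE_zero_series _
  
lemma BT_stable {χ : Fin N → MvPowerSeries (Fin N) ℂ} :
    ∀ (d d' : ℕ) (m : Fin N →₀ ℕ) (l : Fin N), dg m ≤ d → dg m ≤ d' →
      BT χ d m l = BT χ d' m l := by
  intro d
  induction d with
  | zero =>
    intro d' m l hm _
    have hm0 : m = 0 := dg_eq_zero (by omega)
    subst hm0
    rw [BT_zero, BT_zero]
  | succ d ih =>
    intro d' m l hm hm'
    by_cases hm0 : m = 0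
    · subst hm0
      rw [BT_zero, BT_zero]
    · cases d' with
      | zero =>
        exact absurd (dg_eq_zero (by omega)) hm0
      | succ d' =>
        rw [BT_succ χ hm0, BT_succ χ hm0]
        have hj1 : 1 ≤ m (jmin m) := jmin_pos hm0
        have hdg : dg (m - Finsupp.single (jmin m) 1) + 1 = dg m := dg_sub_single hj1
        rw [ih d' _ l (by omega) (by omega)]

/-- the Taylor coefficients (with canonical fuel) -/
def BTm (χ : Fin N → MvPowerSeries (Fin N) ℂ) (m : Fin N →₀ ℕ) (l : Fin N) :
    MvPowerSeries (Fin N) ℂ := BT χ (dg m) m l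

lemma BTm_taylor {χ : Fin N → MvPowerSeries (Fin N) ℂ} (m : Fin N →₀ ℕ) :
    XPow m - chPow χ m = ∑ l, (MvPowerSeries.X l - χ l) * BTm χ m l :=
  BT_taylor (dg m) m (le_refl _)

lemma BTm_ord {χ : Fin N → MvPowerSeries (Fin N) ℂ} (hχ : ∀ j, ordGE (χ j) 1)
    (m : Fin N →₀ ℕ) (l : Fin N) : ordGE (BTm χ m l) (dg m - 1) :=
  BT_ord hχ (dg m) m l (le_refl _)

/-- the "Taylor quotient" of `f`: the coefficient of `X l - χ l` -/
def Bhat (χ : Fin N → MvPowerSeries (Fin N) ℂ) (f : MvPowerSeries (Fin N) ℂ) (l : Fin N) :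
    MvPowerSeries (Fin N) ℂ :=
  fun κ => ∑ m ∈ MSet (dg κ + 1), coeff m f * coeff κ (BTm χ m l)

lemma coeff_Bhat (χ) (f) (l) (κ : Fin N →₀ ℕ) :
    coeff κ (Bhat χ f l) = ∑ m ∈ MSet (dg κ + 1), coeff m f * coeff κ (BTm χ m l) := rfl

lemma coeff_Bhat_indep {χ : Fin N → MvPowerSeries (Fin N) ℂ} (hχ : ∀ j, ordGE (χ j) 1)
    (f) (l) (κ : Fin N →₀ ℕ) {s : Finset (Fin N →₀ ℕ)}
    (hs : ∀ m, dg m ≤ dg κ + 1 → m ∈ s) :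
    coeff κ (Bhat χ f l) = ∑ m ∈ s, coeff m f * coeff κ (BTm χ m l) := by
  rw [coeff_Bhat]
  apply Finset.sum_subset
  · intro m hm
    exact hs m (mem_MSet.mp hm)
  · intro m _ hm
    have h2 : ¬ dg m ≤ dg κ + 1 := fun hc => hm (mem_MSet.mpr hc)
    rw [BTm_ord hχ m l κ (by omega), mul_zero]

end DVRAuxE

noncomputable section DVRAuxF

variable {N : ℕ} [NeZero N]

lemma chPow_sigma (ψ : Fin N → PowerSeries ℂ) (m : Fin N →₀ ℕ) :
    chPow (fun l => sigmaFun (ψ l)) m = sigmaFun (psPow ψ m) := by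
  rw [chPow, psPow]
  calc (∏ j, sigmaFun (ψ j) ^ m j)
      = ∏ j, (sigmaHom (N := N)) (ψ j ^ m j) := by
        apply Finset.prod_congr rfl
        intro j _
        rw [map_pow]
        rfl
    _ = sigmaHom (∏ j, ψ j ^ m j) := (map_prod _ _ _).symm
    _ = sigmaFun (∏ j, ψ j ^ m j) := rfl

lemma coeff_sigma_subPS {ψ : Fin N → PowerSeries ℂ} (hψ : P1 ψ)
    (f : MvPowerSeries (Fin N) ℂ) (κ : Fin N →₀ ℕ) :
    coeff κ (sigmaFun (subPS ψ f)) =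
      ∑ m ∈ MSet (dg κ + 1), coeff m f * coeff κ (chPow (fun l => sigmaFun (ψ l)) m) := by
  have hterm : ∀ m, coeff κ (chPow (fun l => sigmaFun (ψ l)) m) =
      coeff κ (sigmaFun (psPow ψ m)) := by
    intro m; rw [chPow_sigma]
  by_cases hκ : κ = Finsupp.single lst (κ lst)
  · generalize hq : κ lst = q at hκ
    subst hκ
    have hdgκ : dg (Finsupp.single (lst (N := N)) q) = q := dg_single _ _
    rw [coeff_sigma_pure, coeff_subPS hψ, hdgκ]
    symm
    calc ∑ m ∈ MSet (q + 1), coeff m f *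
          coeff (Finsupp.single (lst (N := N)) q) (chPow (fun l => sigmaFun (ψ l)) m)
        = ∑ m ∈ MSet (q + 1), coeff m f * PowerSeries.coeff q (psPow ψ m) :=
          Finset.sum_congr rfl (fun m _ => by rw [hterm m, coeff_sigma_pure])
      _ = ∑ m ∈ MSet q, coeff m f * PowerSeries.coeff q (psPow ψ m) := by
          symm
          apply Finset.sum_subset
          · intro m hm
            rw [mem_MSet] at hm ⊢
            omega
          · intro m hm hm2
            have h3 : ¬ dg m ≤ q := fun hc => hm2 (mem_MSet.mpr hc)
            rw [pord_psPow hψ m q (by omega), mul_zero]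
  · rw [coeff_sigma_nonpure _ hκ]
    symm
    apply Finset.sum_eq_zero
    intro m _
    rw [hterm m, coeff_sigma_nonpure _ hκ, mul_zero]

theorem taylor_main {ψ : Fin N → PowerSeries ℂ} (hψ : P1 ψ) (f : MvPowerSeries (Fin N) ℂ) :
    f - sigmaFun (subPS ψ f) =
      ∑ l, (MvPowerSeries.X l - sigmaFun (ψ l)) * Bhat (fun i => sigmaFun (ψ i)) f l := by
  set χ : Fin N → MvPowerSeries (Fin N) ℂ := fun i => sigmaFun (ψ i) with hχdef
  have hχ : ∀ l, ordGE (χ l) 1 := fun l => sigma_ord (hψ l)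
  ext κ
  have le2 : ∀ p : (Fin N →₀ ℕ) × (Fin N →₀ ℕ), p ∈ Finset.HasAntidiagonal.antidiagonal κ → p.2 ≤ κ := by
    rintro ⟨u, v⟩ huv
    have h1 : u + v = κ := Finset.HasAntidiagonal.mem_antidiagonal.mp huv
    exact Finsupp.le_def.mpr fun j => by rw [← h1]; simp [Finsupp.add_apply]
  have step1 : coeff κ (∑ l, (MvPowerSeries.X l - χ l) * Bhat χ f l) =
      ∑ l, ∑ p ∈ Finset.HasAntidiagonal.antidiagonal κ, ∑ m ∈ MSet (dg κ + 1),
        coeff p.1 (MvPowerSeries.X l - χ l) * (coeff m f * coeff p.2 (BTm χ m l)) := by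
    rw [map_sum]
    apply Finset.sum_congr rfl
    intro l _
    rw [MvPowerSeries.coeff_mul]
    apply Finset.sum_congr rfl
    intro p hp
    rw [coeff_Bhat_indep hχ f l p.2 (s := MSet (dg κ + 1))
      (fun m hm => mem_MSet.mpr (le_trans hm (by
        have := dg_mono (le2 p hp); omega)))]
    rw [Finset.mul_sum]
  have step2 : ∀ l, ∀ m,
      (∑ p ∈ Finset.HasAntidiagonal.antidiagonal κ,
        coeff p.1 (MvPowerSeries.X l - χ l) * (coeff m f * coeff p.2 (BTm χ m l))) =
      coeff m f * coeff κ ((MvPowerSeries.X l - χ l) * BTm χ m l) := by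
    intro l m
    rw [MvPowerSeries.coeff_mul, Finset.mul_sum]
    apply Finset.sum_congr rfl
    intro p _
    ring
  have step3 : coeff κ (∑ l, (MvPowerSeries.X l - χ l) * Bhat χ f l) =
      ∑ m ∈ MSet (dg κ + 1), coeff m f *
        (coeff κ (XPow m) - coeff κ (chPow χ m)) := by
    rw [step1]
    calc (∑ l, ∑ p ∈ Finset.HasAntidiagonal.antidiagonal κ, ∑ m ∈ MSet (dg κ + 1),
            coeff p.1 (MvPowerSeries.X l - χ l) * (coeff m f * coeff p.2 (BTm χ m l)))
        = ∑ l : Fin N, ∑ m ∈ MSet (dg κ + 1), ∑ p ∈ Finset.HasAntidiagonal.antidiagonal κ,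
            coeff p.1 (MvPowerSeries.X l - χ l) * (coeff m f * coeff p.2 (BTm χ m l)) :=
          Finset.sum_congr rfl (fun l _ => Finset.sum_comm)
      _ = ∑ m ∈ MSet (dg κ + 1), ∑ l : Fin N, ∑ p ∈ Finset.HasAntidiagonal.antidiagonal κ,
            coeff p.1 (MvPowerSeries.X l - χ l) * (coeff m f * coeff p.2 (BTm χ m l)) :=
          Finset.sum_comm
      _ = ∑ m ∈ MSet (dg κ + 1), ∑ l : Fin N,
            coeff m f * coeff κ ((MvPowerSeries.X l - χ l) * BTm χ m l) :=
          Finset.sum_congr rfl (fun m _ => Finset.sum_congr rfl (fun l _ => step2 l m))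
      _ = ∑ m ∈ MSet (dg κ + 1), coeff m f *
            (coeff κ (XPow m) - coeff κ (chPow χ m)) := by
          apply Finset.sum_congr rfl
          intro m _
          rw [← Finset.mul_sum]
          congr 1
          rw [← map_sum, ← BTm_taylor m, map_sub]
  have step4 : ∑ m ∈ MSet (dg κ + 1), coeff m f * coeff κ (XPow m) = coeff κ f := by
    rw [Finset.sum_eq_single_of_mem κ (mem_MSet.mpr (by omega))]
    · rw [coeff_XPow, if_pos rfl, mul_one]
    · intro m _ hm
      rw [coeff_XPow, if_neg (fun h => hm h.symm), mul_zero]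
  rw [map_sub, step3, coeff_sigma_subPS hψ f κ]
  rw [Finset.sum_congr rfl (fun m _ => mul_sub (coeff m f) (coeff κ (XPow m))
    (coeff κ (chPow χ m))), Finset.sum_sub_distrib, step4]

/-- division with remainder: `f` minus its restriction to the curve lies in the ideal
generated by the `X l - σ(ψ l)` -/
theorem taylor_div {ψ : Fin N → PowerSeries ℂ} (hψ : P1 ψ) (f : MvPowerSeries (Fin N) ℂ)
    (I : Ideal (MvPowerSeries (Fin N) ℂ))
    (hmem : ∀ l, MvPowerSeries.X l - sigmaFun (ψ l) ∈ I) :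
    f - sigmaFun (subPS ψ f) ∈ I := by
  rw [taylor_main hψ f]
  exact Ideal.sum_mem I fun l _ => Ideal.mul_mem_right _ I (hmem l)

/-- substituting back: `subPS ψ ∘ sigmaFun = id` when `ψ (last) = X` -/
theorem subPS_sigma {ψ : Fin N → PowerSeries ℂ} (hψ : P1 ψ)
    (hlast : ψ (lst (N := N)) = PowerSeries.X) (h : PowerSeries ℂ) :
    subPS ψ (sigmaFun h) = h := by
  ext d
  rw [coeff_subPS hψ]
  rw [Finset.sum_eq_single (Finsupp.single (lst (N := N)) d)]
  · rw [coeff_sigma_pure, psPow_single, hlast]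
    rw [PowerSeries.coeff_X_pow, if_pos rfl, mul_one]
  · intro m _ hm
    by_cases hmp : m = Finsupp.single lst (m lst)
    · generalize hq : m lst = q at hmp
      subst hmp
      rw [coeff_sigma_pure, psPow_single, hlast, PowerSeries.coeff_X_pow, if_neg, mul_zero]
      intro hdq
      exact hm (by rw [hdq])
    · rw [coeff_sigma_nonpure _ hmp, zero_mul]
  · intro hmem
    exfalso
    apply hmem
    rw [mem_MSet, dg_single]

end DVRAuxF

noncomputable section DVRAuxG

variable {N : ℕ} [NeZero N]
variable (γn : ℕ → MvPowerSeries (Fin N) ℂ)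

lemma ordGE_sum {s : Finset ℕ} {F : ℕ → MvPowerSeries (Fin N) ℂ} {k : ℕ}
    (h : ∀ i ∈ s, ordGE (F i) k) : ordGE (∑ i ∈ s, F i) k := by
  intro m hm
  rw [map_sum]
  exact Finset.sum_eq_zero fun i hi => h i hi m hm

lemma sigmaFun_mul (a b : PowerSeries ℂ) :
    sigmaFun (N := N) (a * b) = sigmaFun a * sigmaFun b := map_mul (sigmaHom (N := N)) a b

/-- the family `X_j - σ(φ_j)`, as a function of `ℕ` -/
def vn (j : ℕ) : MvPowerSeries (Fin N) ℂ :=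
  if h : j < N then MvPowerSeries.X ⟨j, h⟩ - sigmaFun (phiF γn ⟨j, h⟩) else 0

/-- the normalized ideal generators `X_j - γ_j X_{j+1}` -/
def gpn (l : ℕ) : MvPowerSeries (Fin N) ℂ :=
  if h : l + 1 < N then MvPowerSeries.X ⟨l, by omega⟩ - γn l * MvPowerSeries.X ⟨l + 1, h⟩ else 0

/-- the Taylor errors -/
def θn (l : ℕ) : MvPowerSeries (Fin N) ℂ :=
  γn l - sigmaFun (subPS (phiF γn) (γn l))

/-- `σ(φ_j)` -/
def sφ (j : ℕ) : MvPowerSeries (Fin N) ℂ :=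
  if h : j < N then sigmaFun (phiF γn ⟨j, h⟩) else 0

lemma ordGE_sφ (j : ℕ) : ordGE (sφ γn j) 1 := by
  rw [sφ]
  split_ifs with h
  · exact sigma_ord (P1_phiF γn ⟨j, h⟩)
  · exact ordGE_zero_series 1

lemma vn_rec (j : ℕ) (h : j + 1 < N) :
    vn γn j = gpn γn j + γn j * vn γn (j + 1) + θn γn j * sφ γn (j + 1) := by
  have hj : j < N := by omega
  rw [vn, dif_pos hj, vn, dif_pos h, gpn, dif_pos h, θn, sφ, dif_pos h]
  have hfix : phiF γn ⟨j, hj⟩ = subPS (phiF γn) (γn j) * phiF γn ⟨j + 1, h⟩ := by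
    have := phiF_rec γn ⟨j, hj⟩ h
    exact this
  rw [hfix, sigmaFun_mul]
  ring

lemma vn_last : vn γn (N - 1) = 0 := by
  have h : N - 1 < N := Nat.sub_lt (NeZero.pos N) one_pos
  rw [vn, dif_pos h]
  have : (⟨N - 1, h⟩ : Fin N) = lst := rfl
  rw [this, phiF_last, sigma_X, sub_self]

/-- the component functions of the Taylor quotients, `ℕ`-indexed -/
def BhatN (l p : ℕ) : MvPowerSeries (Fin N) ℂ :=
  if h : p < N then Bhat (fun i => sigmaFun (phiF γn i)) (γn l) ⟨p, h⟩ else 0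

lemma θn_taylor (l : ℕ) : θn γn l = ∑ p ∈ Finset.range N, vn γn p * BhatN γn l p := by
  rw [θn]
  have h1 := taylor_main (P1_phiF γn) (γn l)
  rw [h1]
  rw [← Fin.sum_univ_eq_sum_range (fun p =>  vn γn p * BhatN γn l p) N]
  apply Finset.sum_congr rfl
  intro i _
  have hi : (i : ℕ) < N := i.isLt
  rw [vn, dif_pos hi, BhatN, dif_pos hi]

lemma vn_unroll : ∀ (t j : ℕ), j + t = N - 1 →
    vn γn j = ∑ l ∈ Finset.Ico j (N - 1), (∏ r ∈ Finset.Ico j l, γn r) *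
      (gpn γn l + θn γn l * sφ γn (l + 1)) := by
  intro t
  induction t with
  | zero =>
    intro j hj
    have : j = N - 1 := by omega
    subst this
    rw [vn_last]
    rw [Finset.Ico_self, Finset.sum_empty]
  | succ t ih =>
    intro j hj
    have hN : 0 < N := NeZero.pos N
    have h1 : j + 1 < N := by omega
    have h2 : j < N - 1 := by omega
    rw [vn_rec γn j h1, ih (j + 1) (by omega)]
    rw [Finset.sum_eq_sum_Ico_succ_bot h2]
    rw [Finset.prod_Ico_eq_prod_range]
    simp only [Nat.sub_self, Finset.range_zero, Finset.prod_empty, one_mul]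
    rw [Finset.mul_sum]
    rw [add_right_comm]
    congr 1
    apply Finset.sum_congr rfl
    intro l hl
    have hjl : j < l := (Finset.mem_Ico.mp hl).1
    rw [Finset.prod_eq_prod_Ico_succ_bot (by omega : j < l)]
    ring

/-- the matrix of the fixed-point equation for the `vn` -/
def Mn (j p : ℕ) : MvPowerSeries (Fin N) ℂ :=
  ∑ l ∈ Finset.Ico j (N - 1), ((∏ r ∈ Finset.Ico j l, γn r) * BhatN γn l p) * sφ γn (l + 1)

lemma ordGE_Mn (j p : ℕ) : ordGE (Mn γn j p) 1 :=
  ordGE_sum fun l _ => ordGE_mul_left (ordGE_sφ γn (l + 1))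

/-- the inhomogeneous term -/
def wn (j : ℕ) : MvPowerSeries (Fin N) ℂ :=
  ∑ l ∈ Finset.Ico j (N - 1), (∏ r ∈ Finset.Ico j l, γn r) * gpn γn l

lemma vn_id1 (j : ℕ) (hj : j < N) :
    vn γn j = wn γn j + ∑ p ∈ Finset.range N, Mn γn j p * vn γn p := by
  rw [vn_unroll γn (N - 1 - j) j (by omega)]
  rw [Finset.sum_congr rfl (fun l _ => mul_add ((∏ r ∈ Finset.Ico j l, γn r))
    (gpn γn l) (θn γn l * sφ γn (l + 1)))]
  rw [Finset.sum_add_distrib]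
  rw [wn]
  congr 1
  calc ∑ l ∈ Finset.Ico j (N - 1), (∏ r ∈ Finset.Ico j l, γn r) * (θn γn l * sφ γn (l + 1))
      = ∑ l ∈ Finset.Ico j (N - 1), ∑ p ∈ Finset.range N,
          (((∏ r ∈ Finset.Ico j l, γn r) * BhatN γn l p) * sφ γn (l + 1)) * vn γn p := by
        apply Finset.sum_congr rfl
        intro l _
        rw [θn_taylor γn l, Finset.sum_mul, Finset.mul_sum]
        apply Finset.sum_congr rfl
        intro p _
        ring
    _ = ∑ p ∈ Finset.range N, ∑ l ∈ Finset.Ico j (N - 1),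
          (((∏ r ∈ Finset.Ico j l, γn r) * BhatN γn l p) * sφ γn (l + 1)) * vn γn p :=
        Finset.sum_comm
    _ = ∑ p ∈ Finset.range N, Mn γn j p * vn γn p := by
        apply Finset.sum_congr rfl
        intro p _
        rw [Mn, Finset.sum_mul]

/-- powers of the matrix applied to the coefficient matrix of `wn` -/
def Tmat : ℕ → ℕ → ℕ → MvPowerSeries (Fin N) ℂ
  | 0 => fun j i => if j ≤ i then ∏ r ∈ Finset.Ico j i, γn r else 0
  | (k + 1) => fun j i => ∑ p ∈ Finset.range N, Mn γn j p * Tmat k p i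

lemma Tmat_zero_apply (j i : ℕ) :
    Tmat γn 0 j i = if j ≤ i then ∏ r ∈ Finset.Ico j i, γn r else 0 := rfl

lemma Tmat_succ_apply (k j i : ℕ) :
    Tmat γn (k + 1) j i = ∑ p ∈ Finset.range N, Mn γn j p * Tmat γn k p i := rfl

lemma wn_Tmat (j : ℕ) : wn γn j = ∑ i ∈ Finset.range (N - 1), Tmat γn 0 j i * gpn γn i := by
  rw [wn]
  calc ∑ l ∈ Finset.Ico j (N - 1), (∏ r ∈ Finset.Ico j l, γn r) * gpn γn l
      = ∑ i ∈ Finset.Ico j (N - 1), Tmat γn 0 j i * gpn γn i := by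
        apply Finset.sum_congr rfl
        intro i hi
        rw [Finset.mem_Ico] at hi
        rw [Tmat_zero_apply, if_pos hi.1]
    _ = ∑ i ∈ Finset.range (N - 1), Tmat γn 0 j i * gpn γn i := by
        apply Finset.sum_subset
        · intro i hi
          rw [Finset.mem_Ico] at hi
          rw [Finset.mem_range]
          omega
        · intro i hi hni
          rw [Finset.mem_range] at hi
          rw [Finset.mem_Ico] at hni
          rw [Tmat_zero_apply, if_neg (by omega), zero_mul]

lemma ordGE_Tmat (k : ℕ) (j i : ℕ) : ordGE (Tmat γn k j i) k := by
  induction k generalizing j with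
  | zero => exact ordGE_zero _
  | succ k ih =>
    show ordGE (∑ p ∈ Finset.range N, Mn γn j p * Tmat γn k p i) (k + 1)
    apply ordGE_sum
    intro p _
    have h1 := ordGE_mul (ordGE_Mn γn j p) (ih p)
    exact ordGE_mono h1 (by omega)

/-- the limit `∑ₖ Mⁿᵏ·w`, defined coefficientwise -/
def Tlim (j i : ℕ) : MvPowerSeries (Fin N) ℂ :=
  fun κ => ∑ k ∈ Finset.range (dg κ + 1), coeff κ (Tmat γn k j i)

lemma coeff_Tlim (j i : ℕ) (κ : Fin N →₀ ℕ) :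
    coeff κ (Tlim γn j i) = ∑ k ∈ Finset.range (dg κ + 1), coeff κ (Tmat γn k j i) := rfl

lemma Tlim_rec (j i : ℕ) :
    Tlim γn j i = Tmat γn 0 j i + ∑ p ∈ Finset.range N, Mn γn j p * Tlim γn p i := by
  ext κ
  rw [map_add, coeff_Tlim, Finset.sum_range_succ', add_comm]
  congr 1
  symm
  have key : ∀ p : ℕ, ∀ uv ∈ Finset.HasAntidiagonal.antidiagonal κ,
      coeff uv.1 (Mn γn j p) * coeff uv.2 (Tlim γn p i) =
      ∑ k ∈ Finset.range (dg κ), coeff uv.1 (Mn γn j p) * coeff uv.2 (Tmat γn k p i) := by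
    intro p uv huv
    by_cases hu : uv.1 = 0
    · have h0 : coeff uv.1 (Mn γn j p) = 0 := by
        rw [hu]
        exact ordGE_Mn γn j p 0 (by simp [dg])
      rw [h0, zero_mul]
      symm
      apply Finset.sum_eq_zero
      intro k _
      rw [zero_mul]
    · have hsum : uv.1 + uv.2 = κ := Finset.HasAntidiagonal.mem_antidiagonal.mp huv
      have hdgu : 1 ≤ dg uv.1 := by
        by_contra hc
        exact hu (dg_eq_zero (by omega))
      have hdgv : dg uv.2 + 1 ≤ dg κ := by
        have : dg uv.1 + dg uv.2 = dg κ := by rw [← dg_add, hsum]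
        omega
      rw [coeff_Tlim, Finset.mul_sum]
      apply Finset.sum_subset
      · intro k hk
        rw [Finset.mem_range] at hk ⊢
        omega
      · intro k _ hk
        rw [Finset.mem_range] at hk
        rw [ordGE_Tmat γn k p i uv.2 (by omega), mul_zero]
  calc coeff κ (∑ p ∈ Finset.range N, Mn γn j p * Tlim γn p i)
      = ∑ p ∈ Finset.range N, ∑ uv ∈ Finset.HasAntidiagonal.antidiagonal κ,
          coeff uv.1 (Mn γn j p) * coeff uv.2 (Tlim γn p i) := by
        rw [map_sum]
        exact Finset.sum_congr rfl fun p _ => MvPowerSeries.coeff_mul κ _ _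
    _ = ∑ p ∈ Finset.range N, ∑ uv ∈ Finset.HasAntidiagonal.antidiagonal κ, ∑ k ∈ Finset.range (dg κ),
          coeff uv.1 (Mn γn j p) * coeff uv.2 (Tmat γn k p i) :=
        Finset.sum_congr rfl fun p _ => Finset.sum_congr rfl (key p)
    _ = ∑ p ∈ Finset.range N, ∑ k ∈ Finset.range (dg κ), ∑ uv ∈ Finset.HasAntidiagonal.antidiagonal κ,
          coeff uv.1 (Mn γn j p) * coeff uv.2 (Tmat γn k p i) :=
        Finset.sum_congr rfl (fun p _ => Finset.sum_comm)
    _ = ∑ k ∈ Finset.range (dg κ), ∑ p ∈ Finset.range N, ∑ uv ∈ Finset.HasAntidiagonal.antidiagonal κ,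
          coeff uv.1 (Mn γn j p) * coeff uv.2 (Tmat γn k p i) :=
        Finset.sum_comm
    _ = ∑ k ∈ Finset.range (dg κ), coeff κ (∑ p ∈ Finset.range N,
          Mn γn j p * Tmat γn k p i) := by
        apply Finset.sum_congr rfl
        intro k _
        rw [map_sum]
        exact (Finset.sum_congr rfl fun p _ => (MvPowerSeries.coeff_mul κ _ _).symm)
    _ = ∑ k ∈ Finset.range (dg κ), coeff κ (Tmat γn (k + 1) j i) := by
        apply Finset.sum_congr rfl
        intro k _
        rw [Tmat_succ_apply]

/-- candidate solution built from the ideal generators -/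
def vI (j : ℕ) : MvPowerSeries (Fin N) ℂ :=
  ∑ i ∈ Finset.range (N - 1), Tlim γn j i * gpn γn i

lemma vI_id (j : ℕ) :
    vI γn j = wn γn j + ∑ p ∈ Finset.range N, Mn γn j p * vI γn p := by
  rw [vI, wn_Tmat]
  rw [Finset.sum_congr rfl (fun i _ => by rw [Tlim_rec γn j i, add_mul, Finset.sum_mul])]
  rw [Finset.sum_add_distrib]
  congr 1
  calc ∑ i ∈ Finset.range (N - 1), ∑ p ∈ Finset.range N, (Mn γn j p * Tlim γn p i) * gpn γn i
      = ∑ p ∈ Finset.range N, ∑ i ∈ Finset.range (N - 1), (Mn γn j p * Tlim γn p i) * gpn γn i :=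
        Finset.sum_comm
    _ = ∑ p ∈ Finset.range N, Mn γn j p * vI γn p := by
        apply Finset.sum_congr rfl
        intro p _
        rw [vI, Finset.mul_sum]
        apply Finset.sum_congr rfl
        intro i _
        ring

lemma vn_eq_vI (j : ℕ) (hj : j < N) : vn γn j = vI γn j := by
  have hz : ∀ n : ℕ, ∀ κ : Fin N →₀ ℕ, dg κ = n → ∀ p, p < N →
      coeff κ (vn γn p - vI γn p) = 0 := by
    intro n
    induction n using Nat.strong_induction_on with
    | _ n ih =>
      intro κ hκ p hp
      have hid : vn γn p - vI γn p =
          ∑ q ∈ Finset.range N, Mn γn p q * (vn γn q - vI γn q) := by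
        rw [vn_id1 γn p hp, vI_id γn p]
        rw [Finset.sum_congr rfl (fun q _ => mul_sub (Mn γn p q) (vn γn q) (vI γn q))]
        rw [Finset.sum_sub_distrib]
        ring
      rw [hid, map_sum]
      apply Finset.sum_eq_zero
      intro q hq
      rw [MvPowerSeries.coeff_mul]
      apply Finset.sum_eq_zero
      rintro ⟨u, v⟩ huv
      have hsum : u + v = κ := Finset.HasAntidiagonal.mem_antidiagonal.mp huv
      by_cases hu : u = 0
      · rw [hu, ordGE_Mn γn p q 0 (by simp [dg]), zero_mul]
      · have hdgu : 1 ≤ dg u := by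
          by_contra hc
          exact hu (dg_eq_zero (by omega))
        have hdgv : dg v < n := by
          have : dg u + dg v = n := by rw [← dg_add, hsum, hκ]
          omega
        rw [ih (dg v) (by omega) v rfl q (Finset.mem_range.mp hq), mul_zero]
  ext κ
  have h2 := hz (dg κ) κ rfl j hj
  rw [map_sub] at h2
  exact sub_eq_zero.mp h2

theorem vn_mem (I : Ideal (MvPowerSeries (Fin N) ℂ))
    (hg : ∀ i, i + 1 < N → gpn γn i ∈ I) (j : ℕ) (hj : j < N) : vn γn j ∈ I := by
  rw [vn_eq_vI γn j hj, vI]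
  apply Ideal.sum_mem
  intro i hi
  rw [Finset.mem_range] at hi
  exact Ideal.mul_mem_left I _ (hg i (by omega))

end DVRAuxG


set_option maxHeartbeats 1000000 in
/-- In `R = ℂ[[s_0,…,s_{N-1}]]`, the ideal generated by `α_i s_i - β_i s_{i+1}`
(for units `α_i, β_i`, `0 ≤ i ≤ N-2`) cuts out a discrete valuation ring, in which
the image of each variable `s_j` is nonzero and not a unit. -/
theorem power_series_quotient_is_dvr
    (N : ℕ) (hN : 2 ≤ N)
    (α β : Fin (N - 1) → MvPowerSeries (Fin N) ℂ)
    (hα : ∀ i, IsUnit (α i)) (hβ : ∀ i, IsUnit (β i))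
    (I : Ideal (MvPowerSeries (Fin N) ℂ))
    (hI : I = Ideal.span (Set.range fun i : Fin (N - 1) =>
      α i * X (Fin.cast (Nat.succ_pred_eq_of_pos (by omega : 0 < N)) i.castSucc)
        - β i * X (Fin.cast (Nat.succ_pred_eq_of_pos (by omega : 0 < N)) i.succ))) :
    (∃ _ : IsDomain (MvPowerSeries (Fin N) ℂ ⧸ I),
        IsDiscreteValuationRing (MvPowerSeries (Fin N) ℂ ⧸ I)) ∧
      ∀ j : Fin N, Ideal.Quotient.mk I (X j) ≠ 0 ∧ ¬ IsUnit (Ideal.Quotient.mk I (X j)) := by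

  haveI : NeZero N := ⟨by omega⟩
  classical
  set G : Fin (N - 1) → MvPowerSeries (Fin N) ℂ := fun i =>
      α i * X (Fin.cast (Nat.succ_pred_eq_of_pos (by omega : 0 < N)) i.castSucc)
        - β i * X (Fin.cast (Nat.succ_pred_eq_of_pos (by omega : 0 < N)) i.succ) with hG
  -- the normalized coefficients
  set γn : ℕ → MvPowerSeries (Fin N) ℂ := fun l =>
    if h : l + 1 < N then
      (((hα ⟨l, by omega⟩).unit⁻¹ : (MvPowerSeries (Fin N) ℂ)ˣ) : MvPowerSeries (Fin N) ℂ) *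
        β ⟨l, by omega⟩
    else 1 with hγn
  have hγ_unit : ∀ l, IsUnit (γn l) := by
    intro l
    rw [hγn]
    dsimp only
    split_ifs with h
    · exact ((hα ⟨l, by omega⟩).unit⁻¹).isUnit.mul (hβ ⟨l, by omega⟩)
    · exact isUnit_one
  -- index bookkeeping
  have hidx1 : ∀ (l : ℕ) (h : l + 1 < N),
      (Fin.cast (Nat.succ_pred_eq_of_pos (by omega : 0 < N))
        (⟨l, by omega⟩ : Fin (N - 1)).castSucc) = (⟨l, by omega⟩ : Fin N) := by
    intro l h
    apply Fin.ext
    simp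
  have hidx2 : ∀ (l : ℕ) (h : l + 1 < N),
      (Fin.cast (Nat.succ_pred_eq_of_pos (by omega : 0 < N))
        (⟨l, by omega⟩ : Fin (N - 1)).succ) = (⟨l + 1, h⟩ : Fin N) := by
    intro l h
    apply Fin.ext
    simp
  -- the normalized generators belong to I
  have hgen : ∀ l (h : l + 1 < N), gpn γn l =
      (((hα ⟨l, by omega⟩).unit⁻¹ : (MvPowerSeries (Fin N) ℂ)ˣ) : MvPowerSeries (Fin N) ℂ) *
        G ⟨l, by omega⟩ := by
    intro l h
    rw [gpn, dif_pos h, hG]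
    dsimp only
    rw [hidx1 l h, hidx2 l h, mul_sub, ← mul_assoc, ← mul_assoc]
    rw [IsUnit.val_inv_mul (hα ⟨l, by omega⟩), one_mul]
    congr 2
    rw [hγn]
    dsimp only
    rw [dif_pos h]
  have hgpn_mem : ∀ l, l + 1 < N → gpn γn l ∈ I := by
    intro l h
    rw [hgen l h, hI]
    exact Ideal.mul_mem_left _ _ (Ideal.subset_span ⟨⟨l, by omega⟩, rfl⟩)
  -- the parametrization and the substitution homomorphism
  set φ : Fin N → PowerSeries ℂ := phiF γn with hφ
  have hψ : P1 φ := P1_phiF γn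
  set π : MvPowerSeries (Fin N) ℂ →+* PowerSeries ℂ := subHom φ hψ with hπ
  have hπ_apply : ∀ f, π f = subPS φ f := fun f => rfl
  -- π kills the generators
  have hπG : ∀ i : Fin (N - 1), π (G i) = 0 := by
    intro i
    have hiN : (i : ℕ) + 1 < N := by have := i.isLt; omega
    have hieq : i = (⟨(i : ℕ), by omega⟩ : Fin (N - 1)) := by apply Fin.ext; rfl
    rw [hG]
    dsimp only
    rw [map_sub, map_mul, map_mul]
    rw [show (Fin.cast (Nat.succ_pred_eq_of_pos (by omega : 0 < N)) i.castSucc)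
        = (⟨(i : ℕ), by omega⟩ : Fin N) by apply Fin.ext; simp]
    rw [show (Fin.cast (Nat.succ_pred_eq_of_pos (by omega : 0 < N)) i.succ)
        = (⟨(i : ℕ) + 1, hiN⟩ : Fin N) by apply Fin.ext; simp]
    simp only [hπ_apply]
    rw [subPS_X hψ, subPS_X hψ]
    have hfix : φ ⟨(i : ℕ), by omega⟩ = subPS φ (γn i) * φ ⟨(i : ℕ) + 1, hiN⟩ :=
      phiF_rec γn ⟨(i : ℕ), by omega⟩ hiN
    rw [hfix]
    have hsplit : subPS φ (γn i) =
        subPS φ (((hα i).unit⁻¹ : (MvPowerSeries (Fin N) ℂ)ˣ) : MvPowerSeries (Fin N) ℂ) *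
          subPS φ (β i) := by
      have hγi : γn (i : ℕ) =
          (((hα i).unit⁻¹ : (MvPowerSeries (Fin N) ℂ)ˣ) : MvPowerSeries (Fin N) ℂ) * β i := by
        rw [hγn]
        dsimp only
        rw [dif_pos hiN]
      rw [hγi, ← hπ_apply, ← hπ_apply, ← hπ_apply, map_mul]
    have hone : subPS φ (α i) *
        subPS φ (((hα i).unit⁻¹ : (MvPowerSeries (Fin N) ℂ)ˣ) : MvPowerSeries (Fin N) ℂ)
        = 1 := by
      rw [← hπ_apply, ← hπ_apply, ← map_mul, IsUnit.mul_val_inv, map_one]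
    rw [hsplit]
    linear_combination (subPS φ (β i) * φ ⟨(i : ℕ) + 1, hiN⟩) * hone
  have hIker : I ≤ RingHom.ker π := by
    rw [hI, Ideal.span_le]
    rintro x ⟨i, rfl⟩
    exact RingHom.mem_ker.mpr (hπG i)
  -- X j ≡ σ(φ j) mod I
  have hvmem : ∀ j : Fin N, X j - sigmaFun (φ j) ∈ I := by
    intro j
    have h1 := vn_mem γn I hgpn_mem (j : ℕ) j.isLt
    rw [vn, dif_pos j.isLt] at h1
    exact h1
  -- the quotient map composed with σ
  set e₀ : PowerSeries ℂ →+* MvPowerSeries (Fin N) ℂ ⧸ I :=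
    (Ideal.Quotient.mk I).comp (sigmaHom (N := N)) with he₀
  have he₀_apply : ∀ h, e₀ h = Ideal.Quotient.mk I (sigmaFun h) := fun h => rfl
  have hinj : Function.Injective e₀ := by
    rw [injective_iff_map_eq_zero]
    intro h hh
    rw [he₀_apply, Ideal.Quotient.eq_zero_iff_mem] at hh
    have h2 : π (sigmaFun h) = 0 := hIker hh
    rw [hπ_apply, subPS_sigma hψ (phiF_last γn) h] at h2
    exact h2
  have hsurj : Function.Surjective e₀ := by
    intro x
    obtain ⟨f, rfl⟩ := Ideal.Quotient.mk_surjective x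
    refine ⟨π f, ?_⟩
    rw [he₀_apply, Ideal.Quotient.mk_eq_mk_iff_sub_mem]
    have h1 : f - sigmaFun (subPS φ f) ∈ I := taylor_div hψ f I hvmem
    rw [hπ_apply]
    have h2 := neg_mem h1
    rwa [neg_sub] at h2
  set e : PowerSeries ℂ ≃+* MvPowerSeries (Fin N) ℂ ⧸ I :=
    RingEquiv.ofBijective e₀ ⟨hinj, hsurj⟩ with he
  have he_apply : ∀ h, e h = Ideal.Quotient.mk I (sigmaFun h) := fun h => rfl
  -- the image of X j
  have hXj : ∀ j : Fin N, Ideal.Quotient.mk I (X j) = e (φ j) := by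
    intro j
    rw [he_apply, Ideal.Quotient.mk_eq_mk_iff_sub_mem]
    exact hvmem j
  -- φ j ≠ 0
  have hφne : ∀ (t : ℕ) (j : Fin N), (j : ℕ) + t = N - 1 → φ j ≠ 0 := by
    intro t
    induction t with
    | zero =>
      intro j hj
      have : j = lst := by apply Fin.ext; simpa [lst] using hj
      rw [this, hφ, phiF_last γn]
      exact PowerSeries.X_ne_zero
    | succ t ih =>
      intro j hj
      have hjN : (j : ℕ) + 1 < N := by have := j.isLt; omega
      have hfix : φ j = subPS φ (γn (j : ℕ)) * φ ⟨(j : ℕ) + 1, hjN⟩ :=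
        phiF_rec γn ⟨(j : ℕ), j.isLt⟩ hjN
      rw [hfix]
      apply mul_ne_zero
      · intro h0
        have h1 : PowerSeries.coeff 0 (subPS φ (γn (j : ℕ))) = coeff 0 (γn (j : ℕ)) :=
          subPS_const hψ _
        rw [h0, map_zero] at h1
        have h2 : IsUnit (constantCoeff (γn (j : ℕ))) :=
          MvPowerSeries.isUnit_iff_constantCoeff.mp (hγ_unit (j : ℕ))
        rw [← MvPowerSeries.coeff_zero_eq_constantCoeff_apply, ← h1] at h2
        exact h2.ne_zero rfl
      · exact ih ⟨(j : ℕ) + 1, hjN⟩ (by simpa using by omega)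
  have hφne' : ∀ j : Fin N, φ j ≠ 0 := by
    intro j
    exact hφne (N - 1 - (j : ℕ)) j (by have := j.isLt; omega)
  -- φ j is not a unit
  have hφnu : ∀ j : Fin N, ¬ IsUnit (φ j) := by
    intro j hu
    have h1 : IsUnit (PowerSeries.constantCoeff (φ j)) :=
      PowerSeries.isUnit_iff_constantCoeff.mp hu
    rw [← PowerSeries.coeff_zero_eq_constantCoeff_apply] at h1
    rw [hψ j 0 Nat.one_pos] at h1
    exact h1.ne_zero rfl
  -- transfer the structures
  haveI hdom : IsDomain (MvPowerSeries (Fin N) ℂ ⧸ I) :=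
    Function.Injective.isDomain e.symm.toRingHom e.symm.injective
  haveI hpir : IsPrincipalIdealRing (MvPowerSeries (Fin N) ℂ ⧸ I) :=
    IsPrincipalIdealRing.of_surjective e.toRingHom e.surjective
  haveI hloc : IsLocalRing (MvPowerSeries (Fin N) ℂ ⧸ I) := e.isLocalRing
  have hXne : ∀ j : Fin N, Ideal.Quotient.mk I (X j) ≠ 0 := by
    intro j h0
    rw [hXj j] at h0
    exact hφne' j (by
      have := e.injective (h0.trans (map_zero e).symm)
      exact this)
  have hXnu : ∀ j : Fin N, ¬ IsUnit (Ideal.Quotient.mk I (X j)) := by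
    intro j hu
    rw [hXj j] at hu
    apply hφnu j
    have h2 := hu.map e.symm.toRingHom
    rw [RingEquiv.toRingHom_eq_coe, RingEquiv.coe_toRingHom, RingEquiv.symm_apply_apply] at h2
    exact h2
  have hdvr : IsDiscreteValuationRing (MvPowerSeries (Fin N) ℂ ⧸ I) := by
    refine { not_a_field' := ?_ }
    intro hbot
    have h1 : Ideal.Quotient.mk I (X (lst (N := N))) ∈ IsLocalRing.maximalIdeal _ :=
      (IsLocalRing.mem_maximalIdeal _).mpr (hXnu lst)
    rw [hbot] at h1
    exact hXne lst (Submodule.mem_bot _ |>.mp h1)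
  exact ⟨⟨hdom, hdvr⟩, fun j => ⟨hXne j, hXnu j⟩⟩
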